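/- Let X be a nonzero Banach space over 𝕂 ∈ {ℝ, ℂ} and let A be a bounded linear operator on X. Then A is norm-parallel to the identity operator I, i.e. there exists λ with |λ| = 1 such that ‖A + λ·I‖ = ‖A‖ + 1, if and only if ‖A‖ = v(A), where v(A) = sup{ |x*(Ax)| : x ∈ X, x* ∈ X*, ‖x‖ = 1, ‖x*‖ = 1, x*(x) = 1 } is the numerical radius of A. -/

import Mathlib

open Filter Topology

lemma my_ekeland {Y : Type*} [MetricSpace Y] [CompleteSpace Y] (F : Y → ℝ)
    (hF : Continuous F) (h0 : ∀ z, 0 ≤ F z) {α : ℝ} (hα : 0 < α) (x : Y) :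
    ∃ y, F y + α * dist y x ≤ F x ∧ ∀ z, F y ≤ F z + α * dist z y := by
  set S : Y → Set Y := fun w => {z | F z + α * dist z w ≤ F w} with hS
  have hmemself : ∀ w, w ∈ S w := fun w => by simp [hS]
  have hbdd : ∀ w, BddBelow (F '' S w) := fun w =>
    ⟨0, by rintro r ⟨z, _, rfl⟩; exact h0 z⟩
  set m : Y → ℝ := fun w => sInf (F '' S w) with hm
  have hchoice : ∀ (n : ℕ) (w : Y), ∃ z, z ∈ S w ∧ F z < m w + (1/2)^n := by
    intro n w
    have hne : (F '' S w).Nonempty := ⟨F w, w, hmemself w, rfl⟩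
    have hlt : m w < m w + (1/2)^n := lt_add_of_pos_right _ (by positivity)
    obtain ⟨r, ⟨z, hz, rfl⟩, hr⟩ := exists_lt_of_csInf_lt hne hlt
    exact ⟨z, hz, hr⟩
  set seq : ℕ → Y := fun n => Nat.rec x (fun n w => (hchoice n w).choose) n with hseq
  have hstep : ∀ n, seq (n+1) ∈ S (seq n) ∧ F (seq (n+1)) < m (seq n) + (1/2)^n := by
    intro n
    exact (hchoice n (seq n)).choose_spec
  have htrans : ∀ {w w' z}, z ∈ S w' → w' ∈ S w → z ∈ S w := by
    intro w w' z hz hw'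
    simp only [hS, Set.mem_setOf_eq] at *
    have := dist_triangle z w' w
    nlinarith [dist_nonneg (x := z) (y := w')]
  have hchain : ∀ n k, seq (n + k) ∈ S (seq n) := by
    intro n k
    induction k with
    | zero => exact hmemself _
    | succ k ih => exact htrans (hstep (n + k)).1 ih
  have hchain' : ∀ n k, n ≤ k → seq k ∈ S (seq n) := by
    intro n k hnk
    obtain ⟨j, rfl⟩ := Nat.exists_eq_add_of_le hnk
    exact hchain n j
  have hdistle : ∀ n k, n ≤ k → α * dist (seq k) (seq n) ≤ F (seq n) - F (seq k) := by
    intro n k hnk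
    have := hchain' n k hnk
    simp only [hS, Set.mem_setOf_eq] at this
    linarith
  have hFanti : Antitone (fun n => F (seq n)) := by
    refine antitone_nat_of_succ_le fun n => ?_
    have := hdistle n (n+1) (Nat.le_succ n)
    nlinarith [dist_nonneg (x := seq (n+1)) (y := seq n)]
  -- limit of F (seq n)
  have hFbdd : BddBelow (Set.range fun n => F (seq n)) := ⟨0, by rintro r ⟨n, rfl⟩; exact h0 _⟩
  set L : ℝ := ⨅ n, F (seq n) with hL
  have hFtend : Tendsto (fun n => F (seq n)) atTop (𝓝 L) :=
    tendsto_atTop_ciInf hFanti hFbdd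
  have hLle : ∀ n, L ≤ F (seq n) := fun n => ciInf_le hFbdd n
  -- Cauchy
  have hcauchy : CauchySeq seq := by
    refine cauchySeq_of_le_tendsto_0 (fun n => (F (seq n) - L) / α) ?_ ?_
    · intro n k N hn hk
      show dist (seq n) (seq k) ≤ (F (seq N) - L) / α
      rw [le_div_iff₀ hα]
      rcases le_total n k with h | h
      · have h1 := hdistle n k h
        have h2 : F (seq n) ≤ F (seq N) := hFanti hn
        have h3 := hLle k
        rw [dist_comm]
        nlinarith
      · have h1 := hdistle k n h
        have h2 : F (seq k) ≤ F (seq N) := hFanti hk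
        have h3 := hLle n
        nlinarith
    · have : Tendsto (fun n => (F (seq n) - L) / α) atTop (𝓝 ((L - L)/α)) :=
        ((hFtend.sub tendsto_const_nhds).div_const α)
      simpa using this
  obtain ⟨y, hy⟩ := cauchySeq_tendsto_of_complete hcauchy
  have hFy : F y = L := tendsto_nhds_unique ((hF.tendsto y).comp hy) hFtend
  have hyS : ∀ n, F y + α * dist y (seq n) ≤ F (seq n) := by
    intro n
    have hd : Tendsto (fun k => dist (seq k) (seq n)) atTop (𝓝 (dist y (seq n))) :=
      ((continuous_id.dist continuous_const).tendsto y).comp hy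
    have htt : Tendsto (fun k => F (seq k) + α * dist (seq k) (seq n)) atTop
        (𝓝 (F y + α * dist y (seq n))) :=
      (((hF.tendsto y).comp hy)).add (hd.const_mul α)
    refine le_of_tendsto htt ?_
    filter_upwards [eventually_ge_atTop n] with k hk
    exact hchain' n k hk
  refine ⟨y, ?_, ?_⟩
  · exact hyS 0
  · intro z
    by_contra hcon
    push_neg at hcon
    have hzS : ∀ n, z ∈ S (seq n) := by
      intro n
      have h1 := hyS n
      have h2 := dist_triangle z y (seq n)
      simp only [hS, Set.mem_setOf_eq]
      nlinarith
    have hzm : ∀ n, m (seq n) ≤ F z := fun n => csInf_le (hbdd _) ⟨z, hzS n, rfl⟩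
    have hLz : L ≤ F z := by
      have h1 : ∀ n, F (seq (n+1)) < F z + (1/2)^n := fun n =>
        lt_of_lt_of_le (hstep n).2 (by linarith [hzm n])
      have h2 : Tendsto (fun n : ℕ => F z + (1/2:ℝ)^n) atTop (𝓝 (F z + 0)) :=
        tendsto_const_nhds.add (tendsto_pow_atTop_nhds_zero_of_lt_one (by norm_num) (by norm_num))
      have h3 : Tendsto (fun n => F (seq (n+1))) atTop (𝓝 L) :=
        hFtend.comp (tendsto_add_atTop_nat 1)
      have := le_of_tendsto_of_tendsto h3 h2 (Eventually.of_forall fun n => (h1 n).le)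
      simpa using this
    have : α * dist z y < 0 := by rw [hFy] at hcon; linarith
    nlinarith [dist_nonneg (x := z) (y := y)]
open RCLike

lemma norm_le_of_re_le' {𝕜 X : Type*} [RCLike 𝕜] [NormedAddCommGroup X] [NormedSpace 𝕜 X]
    (u : X →L[𝕜] 𝕜) {c : ℝ} (hc : 0 ≤ c) (h : ∀ w, re (u w) ≤ c * ‖w‖) : ‖u‖ ≤ c := by
  refine u.opNorm_le_bound hc fun w => ?_
  rcases eq_or_ne (u w) 0 with h0 | h0
  · rw [h0, norm_zero]; positivity
  · set θ : 𝕜 := (‖u w‖ : 𝕜) * (u w)⁻¹ with hθ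
    have hθn : ‖θ‖ = 1 := by
      rw [hθ, norm_mul, norm_inv, norm_ofReal, abs_of_nonneg (norm_nonneg _)]
      field_simp [norm_ne_zero_iff.2 h0]
    have huθ : u (θ • w) = (‖u w‖ : 𝕜) := by
      rw [map_smul, smul_eq_mul, hθ]
      field_simp
    have h2 := h (θ • w)
    rw [huθ, ofReal_re, norm_smul, hθn, one_mul] at h2
    exact h2

lemma eq_one_of_re_eq_one {𝕜 : Type*} [RCLike 𝕜] {z : 𝕜} (h1 : ‖z‖ ≤ 1) (h2 : re z = 1) :
    z = 1 := by
  have hsq : ‖z‖ ^ 2 = re z ^ 2 + im z ^ 2 := by rw [norm_sq_eq_def]; ring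
  have him : im z = 0 := by nlinarith [norm_nonneg z]
  apply RCLike.ext <;> simp [h2, him]

set_option maxHeartbeats 1000000 in
open RCLike in
lemma keyBPB {𝕜 X : Type*} [RCLike 𝕜] [NormedAddCommGroup X] [NormedSpace 𝕜 X]
    [NormedSpace ℝ X] [IsScalarTower ℝ 𝕜 X] [CompleteSpace X]
    (g : X →L[𝕜] 𝕜) (hg : ‖g‖ ≤ 1) (x : X) (hx : ‖x‖ = 1)
    {δ : ℝ} (hδ0 : 0 < δ) (hδ1 : δ ≤ 1/4) (hre : 1 - δ ≤ re (g x)) :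
    ∃ (y : X) (h : X →L[𝕜] 𝕜), ‖y‖ = 1 ∧ ‖h‖ = 1 ∧ h y = 1 ∧
      ‖h - g‖ ≤ Real.sqrt δ ∧ ‖y - x‖ ≤ 2 * Real.sqrt δ := by
  set s := Real.sqrt δ with hs
  have hs0 : 0 < s := Real.sqrt_pos.2 hδ0
  have hss : s * s = δ := Real.mul_self_sqrt hδ0.le
  have hs2 : s ≤ 1/2 := by
    nlinarith
  set G : X →L[ℝ] ℝ := (reCLM (K := 𝕜)).comp (g.restrictScalars ℝ) with hGdef
  have hGg : ∀ w, G w = re (g w) := fun w => rfl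
  have hGle : ∀ w, |G w| ≤ ‖w‖ := by
    intro w
    calc |G w| = |re (g w)| := rfl
    _ ≤ ‖g w‖ := abs_re_le_norm _
    _ ≤ ‖g‖ * ‖w‖ := g.le_opNorm w
    _ ≤ 1 * ‖w‖ := by gcongr
    _ = ‖w‖ := one_mul _
  set F : X → ℝ := fun z => ‖z‖ - G z with hFdef
  have hFc : Continuous F := continuous_norm.sub G.continuous
  have hF0 : ∀ z, 0 ≤ F z := fun z => by
    have := (abs_le.1 (hGle z)).2; simp only [hFdef]; linarith
  have hFx : F x ≤ δ := by simp only [hFdef, hx, hGg]; linarith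
  obtain ⟨y₀, hy1, hy2⟩ := my_ekeland F hFc hF0 hs0 x
  have hdyx : dist y₀ x ≤ s := by
    have h1 := hF0 y₀
    have : s * dist y₀ x ≤ s * s := by linarith [hy1, hFx, hss]
    exact le_of_mul_le_mul_left this hs0
  have hny : 1 - s ≤ ‖y₀‖ := by
    have := abs_norm_sub_norm_le y₀ x
    rw [← dist_eq_norm] at this
    have := (abs_le.1 this).1
    linarith [hx ▸ this]
  have hny0 : 0 < ‖y₀‖ := by linarith
  have hy₀ne : y₀ ≠ 0 := norm_pos_iff.1 hny0
  -- base inequality from Ekeland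
  have key : ∀ v : X, ‖y₀‖ ≤ ‖y₀ - v‖ + G v + s * ‖v‖ := by
    intro v
    have h1 := hy2 (y₀ - v)
    have h2 : G (y₀ - v) = G y₀ - G v := map_sub G y₀ v
    have h3 : dist (y₀ - v) y₀ = ‖v‖ := by
      rw [dist_eq_norm]
      have : y₀ - v - y₀ = -v := by abel
      rw [this, norm_neg]
    simp only [hFdef] at h1
    rw [h2, h3] at h1
    linarith
  -- the sublinear functional
  set term : X → X → ℝ := fun w v => ‖w - v‖ + G v + s * ‖v‖ with hterm
  set p : X → ℝ := fun w => sInf (Set.range (term w)) with hp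
  have hbddp : ∀ w, BddBelow (Set.range (term w)) := by
    intro w
    refine ⟨-‖w‖, ?_⟩
    rintro r ⟨v, rfl⟩
    have h1 : ‖v‖ - ‖w‖ ≤ ‖w - v‖ := by
      have := abs_norm_sub_norm_le w v
      linarith [(abs_le.1 this).1]
    have h2 := (abs_le.1 (hGle v)).1
    have h3 : 0 ≤ s * ‖v‖ := by positivity
    simp only [hterm]; linarith
  have hnep : ∀ w, (Set.range (term w)).Nonempty := fun w => ⟨term w 0, 0, rfl⟩
  have hple_norm : ∀ w, p w ≤ ‖w‖ := by
    intro w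
    have : term w 0 = ‖w‖ := by simp [hterm]
    exact this ▸ csInf_le (hbddp w) ⟨0, this ▸ rfl⟩
  have hple_g : ∀ w, p w ≤ G w + s * ‖w‖ := by
    intro w
    have : term w w = G w + s * ‖w‖ := by simp [hterm]
    calc p w ≤ term w w := csInf_le (hbddp w) ⟨w, rfl⟩
    _ = _ := this
  have hpge : ∀ w, -‖w‖ ≤ p w := by
    intro w
    refine le_csInf (hnep w) ?_
    rintro r ⟨v, rfl⟩
    have h1 : ‖v‖ - ‖w‖ ≤ ‖w - v‖ := by
      have := abs_norm_sub_norm_le w v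
      linarith [(abs_le.1 this).1]
    have h2 := (abs_le.1 (hGle v)).1
    have h3 : 0 ≤ s * ‖v‖ := by positivity
    simp only [hterm]; linarith
  have haux : ∀ c : ℝ, 0 < c → ∀ w, p (c • w) ≤ c * p w := by
    intro c hc w
    have h1 : ∀ v, p (c • w) ≤ c * term w v := by
      intro v
      have he : term (c • w) (c • v) = c * term w v := by
        simp only [hterm, ← smul_sub, norm_smul, map_smul, Real.norm_eq_abs,
          abs_of_pos hc, smul_eq_mul]
        ring
      exact he ▸ csInf_le (hbddp _) ⟨c • v, rfl⟩
    have h2 : c⁻¹ * p (c • w) ≤ p w := by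
      refine le_csInf (hnep w) ?_
      rintro r ⟨v, rfl⟩
      rw [inv_mul_le_iff₀ hc]
      exact h1 v
    calc p (c • w) = c * (c⁻¹ * p (c • w)) := by field_simp
    _ ≤ c * p w := by nlinarith
  have hhom : ∀ c : ℝ, 0 < c → ∀ w, p (c • w) = c * p w := by
    intro c hc w
    refine le_antisymm (haux c hc w) ?_
    have := haux c⁻¹ (by positivity) (c • w)
    rw [inv_smul_smul₀ (ne_of_gt hc)] at this
    calc c * p w ≤ c * (c⁻¹ * p (c • w)) := by nlinarith
    _ = p (c • w) := by field_simp
  have hadd : ∀ w w', p (w + w') ≤ p w + p w' := by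
    intro w w'
    have key2 : ∀ v v', p (w + w') ≤ term w v + term w' v' := by
      intro v v'
      refine le_trans (csInf_le (hbddp _) ⟨v + v', rfl⟩) ?_
      simp only [hterm]
      have h1 : ‖w + w' - (v + v')‖ ≤ ‖w - v‖ + ‖w' - v'‖ := by
        have he : w + w' - (v + v') = (w - v) + (w' - v') := by abel
        rw [he]; exact norm_add_le _ _
      have h2 : s * ‖v + v'‖ ≤ s * (‖v‖ + ‖v'‖) :=
        mul_le_mul_of_nonneg_left (norm_add_le v v') hs0.le
      rw [map_add]
      linarith
    have h3 : ∀ v, p (w + w') - p w' ≤ term w v := by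
      intro v
      have h4 : p (w + w') - term w v ≤ p w' := by
        refine le_csInf (hnep w') ?_
        rintro r ⟨v', rfl⟩
        linarith [key2 v v']
      linarith
    have h5 : p (w + w') - p w' ≤ p w := by
      refine le_csInf (hnep w) ?_
      rintro r ⟨v, rfl⟩
      exact h3 v
    linarith
  have hpy : ‖y₀‖ ≤ p y₀ := by
    refine le_csInf (hnep y₀) ?_
    rintro r ⟨v, rfl⟩
    exact key v
  have hdom : ∀ t : ℝ, t * ‖y₀‖ ≤ p (t • y₀) := by
    intro t
    rcases le_or_gt t 0 with ht | ht
    · have h1 : ‖t • y₀‖ = -t * ‖y₀‖ := by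
        rw [norm_smul, Real.norm_eq_abs, abs_of_nonpos ht]
      have := hpge (t • y₀)
      rw [h1] at this
      linarith
    · rw [hhom t ht]
      nlinarith
  -- Hahn-Banach extension
  set f : X →ₗ.[ℝ] ℝ := LinearPMap.mkSpanSingleton y₀ ‖y₀‖ hy₀ne with hfd
  have hf : ∀ z : f.domain, f z ≤ p z := by
    rintro ⟨z, hz⟩
    have hz' : z ∈ Submodule.span ℝ {y₀} := hz
    obtain ⟨t, rfl⟩ := Submodule.mem_span_singleton.1 hz'
    have happ : f ⟨t • y₀, hz⟩ = t • ‖y₀‖ :=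
      LinearPMap.mkSpanSingleton'_apply y₀ ‖y₀‖ _ t hz
    rw [happ]
    simpa [smul_eq_mul] using hdom t
  obtain ⟨φ, hφext, hφle⟩ := exists_extension_of_le_sublinear f p hhom hadd hf
  have hφy : φ y₀ = ‖y₀‖ := by
    have h1 := hφext ⟨y₀, Submodule.mem_span_singleton_self y₀⟩
    rw [LinearPMap.mkSpanSingleton_apply] at h1
    exact h1
  have hφbound : ∀ w, |φ w| ≤ ‖w‖ := by
    intro w
    refine abs_le.2 ⟨?_, (hφle w).trans (hple_norm w)⟩
    have h1 := (hφle (-w)).trans (hple_norm (-w))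
    rw [map_neg, norm_neg] at h1
    linarith
  set φc : X →L[ℝ] ℝ := φ.mkContinuous 1 (fun w => by
    rw [one_mul]; exact (Real.norm_eq_abs _) ▸ hφbound w) with hφc
  have hφcapp : ∀ w, φc w = φ w := fun w => rfl
  set h0 : X →L[𝕜] 𝕜 := φc.extendTo𝕜' with hh0
  have hre0 : ∀ w, re (h0 w) = φ w := by
    intro w
    rw [hh0, ContinuousLinearMap.extendTo𝕜', ContinuousLinearMap.extendTo𝕜'_apply]
    simp only [map_sub, mul_re, I_re, ofReal_re, ofReal_im, mul_zero, zero_mul, sub_zero,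
      zero_sub, neg_zero]
    rfl
  have hn0 : ‖h0‖ ≤ 1 := by
    rw [hh0, ContinuousLinearMap.extendTo𝕜', ContinuousLinearMap.norm_extendTo𝕜']
    exact φ.mkContinuous_norm_le zero_le_one _
  have hdiff : ‖h0 - g‖ ≤ s := by
    refine norm_le_of_re_le' _ hs0.le fun w => ?_
    have h1 : re ((h0 - g) w) = φ w - G w := by
      rw [ContinuousLinearMap.sub_apply, map_sub, hre0, hGg]
    have h2 : φ w ≤ G w + s * ‖w‖ := (hφle w).trans (hple_g w)
    rw [h1]; linarith
  set y : X := ‖y₀‖⁻¹ • y₀ with hy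
  have hyn : ‖y‖ = 1 := by
    rw [hy, norm_smul, Real.norm_eq_abs, abs_of_pos (by positivity), inv_mul_cancel₀ (ne_of_gt hny0)]
  have hval : h0 y = 1 := by
    have h1 : h0 y = ‖y₀‖⁻¹ • h0 y₀ := by
      rw [hy]; exact h0.map_smul_of_tower _ _
    have h2 : re (h0 y) = 1 := by
      rw [h1]
      rw [show re (‖y₀‖⁻¹ • h0 y₀) = ‖y₀‖⁻¹ * re (h0 y₀) from smul_re _ _]
      rw [hre0, hφy, inv_mul_cancel₀ (ne_of_gt hny0)]
    have h3 : ‖h0 y‖ ≤ 1 := by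
      calc ‖h0 y‖ ≤ ‖h0‖ * ‖y‖ := h0.le_opNorm y
      _ ≤ 1 * 1 := by rw [hyn]; gcongr
      _ = 1 := one_mul 1
    exact eq_one_of_re_eq_one h3 h2
  have hn1 : ‖h0‖ = 1 := by
    refine le_antisymm hn0 ?_
    have := h0.le_opNorm y
    rw [hval, norm_one, hyn, mul_one] at this
    exact this
  have hyx : ‖y - x‖ ≤ 2 * s := by
    have h1 : ‖y - y₀‖ = |1 - ‖y₀‖| := by
      rw [hy]
      have he : ‖y₀‖⁻¹ • y₀ - y₀ = (‖y₀‖⁻¹ - 1) • y₀ := by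
        rw [sub_smul, one_smul]
      rw [he, norm_smul, Real.norm_eq_abs, ← abs_of_pos hny0, ← abs_mul]
      congr 1
      field_simp
      rw [abs_of_pos hny0]; ring
    have h2 : |1 - ‖y₀‖| ≤ s := by
      have := abs_norm_sub_norm_le x y₀
      rw [← dist_eq_norm, dist_comm] at this
      rw [← hx]
      exact this.trans hdyx
    have h3 : ‖y₀ - x‖ ≤ s := by rw [← dist_eq_norm]; exact hdyx
    calc ‖y - x‖ ≤ ‖y - y₀‖ + ‖y₀ - x‖ := norm_sub_le_norm_sub_add_norm_sub y y₀ x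
    _ ≤ s + s := add_le_add (h1 ▸ h2) h3
    _ = 2 * s := by ring
  exact ⟨y, h0, hyn, hn1, hval, hdiff, hyx⟩

/-- The numerical radius of a bounded linear operator on a Banach space. -/
noncomputable def numRadius {𝕜 X : Type*} [RCLike 𝕜] [NormedAddCommGroup X] [NormedSpace 𝕜 X]
    (A : X →L[𝕜] X) : ℝ :=
  sSup {r : ℝ | ∃ (x : X) (f : X →L[𝕜] 𝕜), ‖x‖ = 1 ∧ ‖f‖ = 1 ∧ f x = 1 ∧ r = ‖f (A x)‖}

set_option maxHeartbeats 1000000 in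
set_option maxSynthPendingDepth 2 in
open RCLike in
theorem parallel_to_identity_iff_norm_eq_numRadius
    {𝕜 X : Type*} [RCLike 𝕜] [NormedAddCommGroup X] [NormedSpace 𝕜 X]
    [CompleteSpace X] [Nontrivial X] (A : X →L[𝕜] X) :
    (∃ lam : 𝕜, ‖lam‖ = 1 ∧ ‖A + lam • (1 : X →L[𝕜] X)‖ = ‖A‖ + 1) ↔
      ‖A‖ = numRadius A := by
  classical
  set S : Set ℝ :=
    {r : ℝ | ∃ (x : X) (f : X →L[𝕜] 𝕜), ‖x‖ = 1 ∧ ‖f‖ = 1 ∧ f x = 1 ∧ r = ‖f (A x)‖} with hSdef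
  have hnum : numRadius A = sSup S := by rw [numRadius, ← hSdef]
  obtain ⟨v, hv⟩ := exists_ne (0 : X)
  have hvn : (0:ℝ) < ‖v‖ := norm_pos_iff.2 hv
  set u : X := (‖v‖ : 𝕜)⁻¹ • v with hu
  have hun : ‖u‖ = 1 := by
    rw [hu, norm_smul, norm_inv, norm_ofReal, abs_of_pos hvn, inv_mul_cancel₀ (ne_of_gt hvn)]
  have hune : u ≠ 0 := by
    intro h; rw [h, norm_zero] at hun; norm_num at hun
  obtain ⟨f₀, hf₀n, hf₀u⟩ := exists_dual_vector 𝕜 u (norm_ne_zero_iff.2 hune)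
  have hf₀u1 : f₀ u = 1 := by rw [hf₀u, hun]; norm_num
  have hSne : S.Nonempty := ⟨‖f₀ (A u)‖, u, f₀, hun, hf₀n, hf₀u1, rfl⟩
  have hSub : ∀ r ∈ S, r ≤ ‖A‖ := by
    rintro r ⟨x, f, hx, hf, hfx, rfl⟩
    calc ‖f (A x)‖ ≤ ‖f‖ * ‖A x‖ := f.le_opNorm _
    _ ≤ 1 * (‖A‖ * ‖x‖) := by rw [hf, one_mul, one_mul]; exact A.le_opNorm x
    _ = ‖A‖ := by rw [hx]; ring
  have hSbdd : BddAbove S := ⟨‖A‖, hSub⟩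
  have hid : ‖(1 : X →L[𝕜] X)‖ = 1 := norm_one
  constructor
  · rintro ⟨lam, hlam, heq⟩
    rw [hnum]
    refine le_antisymm ?_ (csSup_le hSne hSub)
    refine le_of_forall_pos_le_add fun ε hε => ?_
    have hA1 : (0:ℝ) < ‖A‖ + 1 := by positivity
    set δ : ℝ := min (1/4) ((ε / (3 * (‖A‖ + 1)))^2) with hδdef
    have hδ0 : 0 < δ := by
      apply lt_min (by norm_num)
      positivity
    have hδ1 : δ ≤ 1/4 := min_le_left _ _
    set s : ℝ := Real.sqrt δ with hs
    have hs0 : 0 < s := Real.sqrt_pos.2 hδ0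
    have hsle : s ≤ ε / (3 * (‖A‖ + 1)) := by
      rw [hs]
      calc Real.sqrt δ ≤ Real.sqrt ((ε / (3 * (‖A‖ + 1)))^2) :=
        Real.sqrt_le_sqrt (min_le_right _ _)
      _ = ε / (3 * (‖A‖ + 1)) := Real.sqrt_sq (by positivity)
    have hδs : δ ≤ s := by
      rw [hs]
      calc δ = Real.sqrt (δ^2) := (Real.sqrt_sq hδ0.le).symm
      _ ≤ Real.sqrt δ := Real.sqrt_le_sqrt (by nlinarith)
    set T : X →L[𝕜] X := A + lam • (1 : X →L[𝕜] X) with hTdef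
    have hTn : ‖T‖ = ‖A‖ + 1 := heq
    have hcpos : (0:ℝ) ≤ ‖A‖ + 1 - δ := by
      have := norm_nonneg A; linarith
    have hex : ∃ x : X, ‖x‖ = 1 ∧ ‖A‖ + 1 - δ < ‖T x‖ := by
      by_contra hcon
      push_neg at hcon
      have hble : ‖T‖ ≤ ‖A‖ + 1 - δ := by
        refine T.opNorm_le_bound hcpos fun w => ?_
        rcases eq_or_ne w 0 with rfl | hw
        · simp
        · have hwn : (0:ℝ) < ‖w‖ := norm_pos_iff.2 hw
          have hw1 : ‖(‖w‖ : 𝕜)⁻¹ • w‖ = 1 := by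
            rw [norm_smul, norm_inv, norm_ofReal, abs_of_pos hwn, inv_mul_cancel₀ (ne_of_gt hwn)]
          have := hcon _ hw1
          rw [map_smul, norm_smul, norm_inv, norm_ofReal, abs_of_pos hwn] at this
          rw [inv_mul_le_iff₀ hwn] at this
          linarith [this]
      linarith
    obtain ⟨x, hx, hTx⟩ := hex
    have hTxne : T x ≠ 0 := by
      intro h; rw [h, norm_zero] at hTx; linarith
    obtain ⟨g₀, hg₀n, hg₀T⟩ := exists_dual_vector 𝕜 (T x) (norm_ne_zero_iff.2 hTxne)
    have happ : T x = A x + lam • x := by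
      rw [hTdef]; simp
    have hsplit : g₀ (T x) = g₀ (A x) + lam * g₀ x := by
      rw [happ, map_add, map_smul, smul_eq_mul]
    have hre_sum : re (g₀ (A x)) + re (lam * g₀ x) = ‖T x‖ := by
      have h1 := congrArg re hg₀T
      rw [hsplit, map_add, ofReal_re] at h1
      exact h1
    have hb1 : re (g₀ (A x)) ≤ ‖A‖ := by
      calc re (g₀ (A x)) ≤ ‖g₀ (A x)‖ := re_le_norm _
      _ ≤ ‖g₀‖ * ‖A x‖ := g₀.le_opNorm _
      _ ≤ 1 * (‖A‖ * ‖x‖) := by rw [hg₀n, one_mul, one_mul]; exact A.le_opNorm x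
      _ = ‖A‖ := by rw [hx]; ring
    have hb2 : re (lam * g₀ x) ≤ 1 := by
      calc re (lam * g₀ x) ≤ ‖lam * g₀ x‖ := re_le_norm _
      _ = ‖g₀ x‖ := by rw [norm_mul, hlam, one_mul]
      _ ≤ ‖g₀‖ * ‖x‖ := g₀.le_opNorm _
      _ = 1 := by rw [hg₀n, hx, one_mul]
    set g : X →L[𝕜] 𝕜 := lam • g₀ with hgdef
    have hgn : ‖g‖ = 1 := by rw [hgdef, norm_smul, hlam, hg₀n, one_mul]
    have hgx : 1 - δ ≤ re (g x) := by
      have : g x = lam * g₀ x := by rw [hgdef]; simp [smul_eq_mul]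
      rw [this]
      linarith
    have hgAx : ‖A‖ - δ ≤ ‖g (A x)‖ := by
      have h1 : ‖g (A x)‖ = ‖g₀ (A x)‖ := by
        rw [hgdef]; simp only [ContinuousLinearMap.smul_apply, smul_eq_mul, norm_mul, hlam, one_mul]
      rw [h1]
      calc ‖A‖ - δ ≤ re (g₀ (A x)) := by linarith
      _ ≤ ‖g₀ (A x)‖ := re_le_norm _
    letI : Module ℝ X := RestrictScalars.module ℝ 𝕜 X
    letI : IsScalarTower ℝ 𝕜 X := RestrictScalars.isScalarTower ℝ 𝕜 X
    letI : NormedSpace ℝ X := NormedSpace.restrictScalars ℝ 𝕜 X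
    obtain ⟨y, h, hyn, hhn, hhy, hdiff, hyx⟩ := keyBPB g hgn.le x hx hδ0 hδ1 hgx
    have hrS : ‖h (A y)‖ ∈ S := ⟨y, h, hyn, hhn, hhy, rfl⟩
    have d1 : ‖h (A y) - g (A y)‖ ≤ s * ‖A‖ := by
      calc ‖h (A y) - g (A y)‖ = ‖(h - g) (A y)‖ := by rw [ContinuousLinearMap.sub_apply]
      _ ≤ ‖h - g‖ * ‖A y‖ := (h - g).le_opNorm _
      _ ≤ s * (‖A‖ * ‖y‖) := by
          refine mul_le_mul hdiff (A.le_opNorm y) (norm_nonneg _) hs0.le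
      _ = s * ‖A‖ := by rw [hyn, mul_one]
    have d2 : ‖g (A y) - g (A x)‖ ≤ 2 * s * ‖A‖ := by
      calc ‖g (A y) - g (A x)‖ = ‖g (A y - A x)‖ := by rw [map_sub]
      _ ≤ ‖g‖ * ‖A y - A x‖ := g.le_opNorm _
      _ = ‖A (y - x)‖ := by rw [hgn, one_mul, map_sub]
      _ ≤ ‖A‖ * ‖y - x‖ := A.le_opNorm _
      _ ≤ ‖A‖ * (2 * s) := mul_le_mul_of_nonneg_left hyx (norm_nonneg A)
      _ = 2 * s * ‖A‖ := by ring
    have tri : ‖g (A x)‖ ≤ ‖g (A x) - g (A y)‖ + ‖g (A y) - h (A y)‖ + ‖h (A y)‖ := by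
      have e : g (A x) = (g (A x) - g (A y)) + ((g (A y) - h (A y)) + h (A y)) := by abel
      calc ‖g (A x)‖ = ‖(g (A x) - g (A y)) + ((g (A y) - h (A y)) + h (A y))‖ := by rw [← e]
      _ ≤ ‖g (A x) - g (A y)‖ + ‖(g (A y) - h (A y)) + h (A y)‖ := norm_add_le _ _
      _ ≤ ‖g (A x) - g (A y)‖ + (‖g (A y) - h (A y)‖ + ‖h (A y)‖) := by
          gcongr; exact norm_add_le _ _
      _ = _ := by ring
    have hfinal : ‖A‖ - ε ≤ ‖h (A y)‖ := by
      have hsb : s * (1 + 3 * ‖A‖) ≤ ε := by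
        rw [le_div_iff₀ (by positivity : (0:ℝ) < 3 * (‖A‖ + 1))] at hsle
        nlinarith [hs0.le, norm_nonneg A]
      have hexp : s * (1 + 3 * ‖A‖) = s + 3 * (s * ‖A‖) := by ring
      linarith [tri, d1, d2, hgAx, hδs, hsb, hexp, norm_sub_rev (g (A x)) (g (A y)),
        norm_sub_rev (g (A y)) (h (A y))]
    have := le_csSup hSbdd hrS
    linarith
  · intro hveq'
    have hveq : ‖A‖ = sSup S := by rw [hveq', hnum]
    haveI : ProperSpace 𝕜 := FiniteDimensional.proper_rclike 𝕜 𝕜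
    have hcpt : IsCompact (Metric.sphere (0:𝕜) 1) := isCompact_sphere 0 1
    have hone : (1:𝕜) ∈ Metric.sphere (0:𝕜) 1 := by simp
    have hΦc : Continuous (fun μ : 𝕜 => ‖A + μ • (1 : X →L[𝕜] X)‖) :=
      (continuous_const.add (continuous_id.smul continuous_const)).norm
    obtain ⟨lam, hlam_mem, hmax⟩ := hcpt.exists_isMaxOn ⟨1, hone⟩ hΦc.continuousOn
    have hlam : ‖lam‖ = 1 := mem_sphere_zero_iff_norm.1 hlam_mem
    refine ⟨lam, hlam, ?_⟩
    have hub : ‖A + lam • (1 : X →L[𝕜] X)‖ ≤ ‖A‖ + 1 := by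
      calc ‖A + lam • (1 : X →L[𝕜] X)‖ ≤ ‖A‖ + ‖lam • (1 : X →L[𝕜] X)‖ := norm_add_le _ _
      _ = ‖A‖ + 1 := by rw [norm_smul, hlam, hid, one_mul]
    refine le_antisymm hub ?_
    refine le_of_forall_pos_le_add fun ε hε => ?_
    obtain ⟨r, hrS, hr⟩ := exists_lt_of_lt_csSup hSne
      (show ‖A‖ - ε < sSup S by rw [← hveq]; linarith)
    obtain ⟨x, f, hx, hf, hfx, rfl⟩ := hrS
    have hexμ : ∃ μ : 𝕜, ‖μ‖ = 1 ∧ ‖f (A x) + μ‖ = ‖f (A x)‖ + 1 := by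
      rcases eq_or_ne (f (A x)) 0 with h0 | h0
      · exact ⟨1, norm_one, by rw [h0]; simp⟩
      · have hfn : (0:ℝ) < ‖f (A x)‖ := norm_pos_iff.2 h0
        refine ⟨(‖f (A x)‖ : 𝕜)⁻¹ * f (A x), ?_, ?_⟩
        · rw [norm_mul, norm_inv, norm_ofReal, abs_of_pos hfn, inv_mul_cancel₀ (ne_of_gt hfn)]
        · have he : f (A x) + (‖f (A x)‖ : 𝕜)⁻¹ * f (A x)
              = ((‖f (A x)‖ : 𝕜) + 1) * ((‖f (A x)‖ : 𝕜)⁻¹ * f (A x)) := by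
            have hne : (‖f (A x)‖ : 𝕜) ≠ 0 := by
              rw [ne_eq, ofReal_eq_zero]; exact ne_of_gt hfn
            field_simp
          rw [he, norm_mul, norm_mul, norm_inv, norm_ofReal, abs_of_pos hfn,
            inv_mul_cancel₀ (ne_of_gt hfn), mul_one]
          rw [show ((‖f (A x)‖ : 𝕜) + 1) = ((‖f (A x)‖ + 1 : ℝ) : 𝕜) by push_cast; ring]
          rw [norm_ofReal, abs_of_pos (by positivity)]
    obtain ⟨μ, hμ1, hμ2⟩ := hexμ
    have happ2 : f ((A + μ • (1 : X →L[𝕜] X)) x) = f (A x) + μ := by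
      simp only [ContinuousLinearMap.add_apply, ContinuousLinearMap.smul_apply,
        ContinuousLinearMap.one_apply, map_add, map_smul, smul_eq_mul, hfx, mul_one]
    have hchain : ‖f (A x)‖ + 1 ≤ ‖A + lam • (1 : X →L[𝕜] X)‖ := by
      calc ‖f (A x)‖ + 1 = ‖f ((A + μ • (1 : X →L[𝕜] X)) x)‖ := by rw [happ2, hμ2]
      _ ≤ ‖f‖ * ‖(A + μ • (1 : X →L[𝕜] X)) x‖ := f.le_opNorm _
      _ = ‖(A + μ • (1 : X →L[𝕜] X)) x‖ := by rw [hf, one_mul]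
      _ ≤ ‖A + μ • (1 : X →L[𝕜] X)‖ * ‖x‖ := (A + μ • 1).le_opNorm x
      _ = ‖A + μ • (1 : X →L[𝕜] X)‖ := by rw [hx, mul_one]
      _ ≤ ‖A + lam • (1 : X →L[𝕜] X)‖ := hmax (mem_sphere_zero_iff_norm.2 hμ1)
    linarith
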